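/- Let β ∈ (0,1), L > 0, and let M(a) be the 2×2 matrix with rows [β, β] and [aL(β+1), β(aL+1)] for a > 0. If a < (1-β)²/(2βL), then the spectral radius of M(a) is strictly less than 1. -/

import Mathlib

theorem stmt_5 (β L a : ℝ) (hβ : β ∈ Set.Ioo (0:ℝ) 1) (hL : 0 < L) (ha : 0 < a)
    (hcond : a < (1 - β) ^ 2 / (2 * β * L))
    (M : Matrix (Fin 2) (Fin 2) ℝ)
    (hM : M = !![β, β; a * L * (β + 1), β * (a * L + 1)]) :
    ∀ μ ∈ spectrum ℂ (M.map (Complex.ofReal ·)), ‖μ‖ < 1 := by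
  obtain ⟨hβ0, hβ1⟩ := hβ
  have haL : 0 < a * L := mul_pos ha hL
  intro μ hμ
  rw [spectrum.mem_iff] at hμ
  have hdet : (algebraMap ℂ (Matrix (Fin 2) (Fin 2) ℂ) μ - M.map (Complex.ofReal ·)).det = 0 := by
    by_contra h
    exact hμ ((Matrix.isUnit_iff_isUnit_det _).mpr (Ne.isUnit h))
  rw [hM] at hdet
  simp [Matrix.algebraMap_eq_diagonal, Matrix.det_fin_two, Matrix.map_apply,
    Matrix.diagonal, Matrix.sub_apply] at hdet
  have key : μ ^ 2 - ((β * (2 + a * L) : ℝ) : ℂ) * μ + ((β * β - a * L * β : ℝ) : ℂ) = 0 := by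
    push_cast
    linear_combination hdet
  set t : ℝ := β * (2 + a * L) with ht
  set d : ℝ := β * β - a * L * β with hd
  set x := μ.re with hx
  set y := μ.im with hy
  have him : y * (2 * x - t) = 0 := by
    have := congrArg Complex.im key
    simp [pow_two, Complex.mul_im, Complex.mul_re] at this
    ring_nf at this ⊢
    linarith [this]
  have hre : x ^ 2 - y ^ 2 - t * x + d = 0 := by
    have := congrArg Complex.re key
    simp [pow_two, Complex.mul_im, Complex.mul_re] at this
    ring_nf at this ⊢
    linarith [this]
  have hc : a * (2 * β * L) < (1 - β) ^ 2 := (lt_div_iff₀ (by positivity)).mp hcond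
  have ht2 : t < 2 := by rw [ht]; nlinarith
  have hq1 : 1 - t + d > 0 := by rw [ht, hd]; nlinarith
  have hqm1 : 1 + t + d > 0 := by rw [ht, hd]; nlinarith
  have ht0 : 0 < t := by rw [ht]; nlinarith
  have hy0 : y = 0 := by
    rcases mul_eq_zero.mp him with h | h
    · exact h
    · exfalso
      have hxt : x = t / 2 := by linarith
      have hneg : d - t ^ 2 / 4 < 0 := by
        rw [ht, hd]; nlinarith [mul_pos haL hβ0, sq_nonneg (a * L * β)]
      rw [hxt] at hre
      nlinarith [sq_nonneg y]
  have hxeq : x ^ 2 - t * x + d = 0 := by rw [hy0] at hre; linarith [hre]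
  have hx1 : x < 1 := by nlinarith [sq_nonneg (x - 1)]
  have hxm1 : -1 < x := by nlinarith [sq_nonneg (x + 1)]
  have hμx : μ = (x : ℂ) := by
    apply Complex.ext
    · simp [hx]
    · simpa using hy0
  rw [hμx, Complex.norm_real, Real.norm_eq_abs, abs_lt]
  exact ⟨hxm1, hx1⟩
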